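/- Let F : ℝ^N → ℝ be a C² function with everywhere positive definite Hessian whose gradient vanishes at some point. Then F(x) → +∞ as ‖x‖ → ∞, and F is a proper map (preimages of compact sets are compact). -/

import Mathlib

set_option maxHeartbeats 1600000 in
/-- A `C²` function on `ℝ^N` with everywhere positive definite
Hessian whose gradient vanishes somewhere tends to `+∞` at infinity and is a
proper map. -/
theorem stmt1 (N : ℕ) (F : (Fin N → ℝ) → ℝ)
    (hF : ContDiff ℝ 2 F)
    (hHpd : ∀ u : Fin N → ℝ, ∀ x : Fin N → ℝ, x ≠ 0 →
      0 < fderiv ℝ (fun v => fderiv ℝ F v x) u x)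
    (hzero : ∃ u₀, fderiv ℝ F u₀ = 0) :
    Filter.Tendsto F (Filter.cocompact (Fin N → ℝ)) Filter.atTop ∧
    ∀ K : Set ℝ, IsCompact K → IsCompact (F ⁻¹' K) := by
  obtain ⟨u₀, hu₀⟩ := hzero
  have hdF : Differentiable ℝ F := hF.differentiable (by norm_num)
  have hcont : Continuous F := hdF.continuous
  -- handle the degenerate case N = 0
  rcases Nat.eq_zero_or_pos N with hN | hN
  · subst hN
    haveI : Subsingleton (Fin 0 → ℝ) := ⟨fun f g => funext fun i => absurd i.2 (by omega)⟩
    haveI : Finite (Fin 0 → ℝ) := Finite.of_subsingleton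
    haveI : CompactSpace (Fin 0 → ℝ) := Finite.compactSpace
    constructor
    · rw [Filter.cocompact_eq_bot]; exact Filter.tendsto_bot
    · exact fun K hK => (hK.isClosed.preimage hcont).isCompact
  -- main case
  haveI : Nonempty (Fin N) := ⟨⟨0, hN⟩⟩
  haveI : Nontrivial (Fin N → ℝ) := by
    refine ⟨0, fun _ => 1, ?_⟩
    intro h
    have := congrFun h ⟨0, hN⟩
    norm_num at this
  -- derivatives along lines
  have hψ : ∀ v : Fin N → ℝ, Differentiable ℝ (fun w => fderiv ℝ F w v) := fun v =>
    ((hF.fderiv_right (m := 1) (by norm_num)).differentiable (by norm_num)).clm_apply (differentiable_const v)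
  have key : ∀ v : Fin N → ℝ, v ≠ 0 →
      (F u₀ < F (u₀ + v)) ∧
      (∀ R : ℝ, 1 ≤ R → F u₀ + R * (F (u₀ + v) - F u₀) ≤ F (u₀ + R • v)) := by
    intro v hv
    set g : ℝ → ℝ := fun t => F (u₀ + t • v) with hg_def
    set g' : ℝ → ℝ := fun t => fderiv ℝ F (u₀ + t • v) v with hg'_def
    have hline : ∀ t : ℝ, HasDerivAt (fun t : ℝ => u₀ + t • v) v t := fun t => by
      simpa using ((hasDerivAt_id t).smul_const v).const_add u₀
    have hg : ∀ t, HasDerivAt g (g' t) t := fun t =>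
      (hdF (u₀ + t • v)).hasFDerivAt.comp_hasDerivAt t (hline t)
    have hg' : ∀ t, HasDerivAt g' (fderiv ℝ (fun w => fderiv ℝ F w v) (u₀ + t • v) v) t :=
      fun t => by
        have h := ((hψ v) (u₀ + t • v)).hasFDerivAt.comp_hasDerivAt t (hline t)
        exact h
    have hderivg : deriv g = g' := funext fun t => (hg t).deriv
    have hg'mono : StrictMono g' := by
      apply strictMono_of_deriv_pos
      intro t
      rw [(hg' t).deriv]
      exact hHpd (u₀ + t • v) v hv
    have hg'0 : g' 0 = 0 := by
      simp only [hg'_def, zero_smul, add_zero, hu₀]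
      rfl
    have hg'pos : ∀ t : ℝ, 0 < t → 0 < g' t := fun t ht => by
      rw [← hg'0]; exact hg'mono ht
    -- g is strictly increasing on [0, ∞)
    have hmono : StrictMonoOn g (Set.Ici 0) := by
      apply strictMonoOn_of_deriv_pos (convex_Ici 0)
        (fun t _ => ((hg t).differentiableAt.continuousAt).continuousWithinAt)
      intro t ht
      rw [interior_Ici] at ht
      rw [hderivg]
      exact hg'pos t ht
    have h01 : g 0 < g 1 := hmono (by norm_num) (by norm_num) one_pos
    have hg0 : g 0 = F u₀ := by simp [hg_def]
    have hg1 : g 1 = F (u₀ + v) := by simp [hg_def]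
    constructor
    · rw [← hg0, ← hg1]; exact h01
    -- convexity of g
    have hconv : ConvexOn ℝ Set.univ g := by
      refine (StrictMonoOn.strictConvexOn_of_deriv convex_univ
        (fun t _ => ((hg t).differentiableAt.continuousAt).continuousWithinAt) ?_).convexOn
      rw [interior_univ, hderivg]
      exact fun a _ b _ hab => hg'mono hab
    intro R hR
    have hRpos : (0 : ℝ) < R := lt_of_lt_of_le one_pos hR
    have ha : (0:ℝ) ≤ 1 - 1/R := by
      have : 1/R ≤ 1 := by rw [div_le_one hRpos]; exact hR
      linarith
    have hb : (0:ℝ) ≤ 1/R := by positivity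
    have hab : (1 - 1/R) + 1/R = 1 := by ring
    have hineq : g ((1 - 1/R) • (0:ℝ) + (1/R) • R) ≤ (1 - 1/R) * g 0 + (1/R) * g R :=
      hconv.2 (Set.mem_univ (0 : ℝ)) (Set.mem_univ R) ha hb hab
    have hc : (1 - 1/R) • (0:ℝ) + (1/R) • R = 1 := by
      field_simp
      rw [smul_zero, zero_add, smul_eq_mul, one_div, inv_mul_cancel₀ (ne_of_gt hRpos)]
    rw [hc] at hineq
    have hFg : F (u₀ + R • v) = g R := by simp [hg_def]
    rw [hFg, ← hg0, ← hg1]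
    have hR0 : R ≠ 0 := ne_of_gt hRpos
    have h1 : R * g 1 ≤ (R - 1) * g 0 + g R := by
      have := mul_le_mul_of_nonneg_left hineq (le_of_lt hRpos)
      field_simp at this ⊢
      nlinarith [this]
    nlinarith [h1]
  -- compact sphere minimum
  have hcont2 : Continuous fun w : Fin N → ℝ => F (u₀ + w) :=
    hcont.comp (continuous_const.add continuous_id)
  obtain ⟨v₀, hv₀S, hmin⟩ := (isCompact_sphere (0 : Fin N → ℝ) 1).exists_isMinOn
    (NormedSpace.sphere_nonempty.mpr zero_le_one) hcont2.continuousOn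
  have hv₀norm : ‖v₀‖ = 1 := mem_sphere_zero_iff_norm.mp hv₀S
  have hv₀ne : v₀ ≠ 0 := by
    intro h; rw [h, norm_zero] at hv₀norm; norm_num at hv₀norm
  obtain ⟨m, hm_def⟩ : ∃ m : ℝ, m = F (u₀ + v₀) - F u₀ := ⟨_, rfl⟩
  have hmpos : 0 < m := by
    have := (key v₀ hv₀ne).1
    rw [hm_def]; linarith
  -- growth estimate
  have growth : ∀ x : Fin N → ℝ, 1 ≤ ‖x - u₀‖ → F u₀ + ‖x - u₀‖ * m ≤ F x := by
    intro x hx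
    set R := ‖x - u₀‖ with hR_def
    have hRpos : (0:ℝ) < R := lt_of_lt_of_le one_pos hx
    set v := R⁻¹ • (x - u₀) with hv_def
    have hvnorm : ‖v‖ = 1 := by
      rw [hv_def, norm_smul, norm_inv, norm_norm]
      field_simp
      exact div_self (ne_of_gt hRpos)
    have hvne : v ≠ 0 := by
      intro h; rw [h, norm_zero] at hvnorm; norm_num at hvnorm
    have hxeq : x = u₀ + R • v := by
      rw [hv_def, smul_smul, mul_inv_cancel₀ (ne_of_gt hRpos), one_smul]
      abel
    have hkey := (key v hvne).2 R hx
    have hvm : m ≤ F (u₀ + v) - F u₀ := by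
      have h := hmin (mem_sphere_zero_iff_norm.mpr hvnorm)
      have h' : F (u₀ + v₀) ≤ F (u₀ + v) := h
      rw [hm_def]
      linarith
    rw [hxeq]
    nlinarith [hkey]
  -- tendsto
  have htend : Filter.Tendsto F (Filter.cocompact (Fin N → ℝ)) Filter.atTop := by
    rw [Filter.tendsto_atTop]
    intro b
    rw [Filter.eventually_iff, Filter.mem_cocompact]
    refine ⟨Metric.closedBall u₀ (max 1 ((b - F u₀)/m)), isCompact_closedBall _ _, ?_⟩
    intro x hx
    simp only [Set.mem_compl_iff, Metric.mem_closedBall, not_le, dist_eq_norm] at hx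
    have h1 : 1 ≤ ‖x - u₀‖ := le_of_lt (lt_of_le_of_lt (le_max_left _ _) hx)
    have h2 : (b - F u₀)/m ≤ ‖x - u₀‖ := le_of_lt (lt_of_le_of_lt (le_max_right _ _) hx)
    have := growth x h1
    have h3 : b - F u₀ ≤ ‖x - u₀‖ * m := by
      rw [div_le_iff₀ hmpos] at h2
      linarith
    simp only [Set.mem_setOf_eq]
    linarith
  refine ⟨htend, fun K hK => ?_⟩
  rcases K.eq_empty_or_nonempty with rfl | hKne
  · simp
  obtain ⟨C, hC⟩ := hK.bddAbove
  have hev := (Filter.tendsto_atTop.mp htend) (C + 1)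
  rw [Filter.eventually_iff, Filter.mem_cocompact] at hev
  obtain ⟨t, htc, hsub⟩ := hev
  refine htc.of_isClosed_subset (hK.isClosed.preimage hcont) ?_
  intro x hxK
  by_contra hxt
  have : C + 1 ≤ F x := hsub hxt
  have : F x ≤ C := hC hxK
  linarith
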